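/- A graph G has an edge-labeling by gap if and only if G has no connected component isomorphic to K_2 (an isolated edge). In particular, labeling the edges by distinct powers of two yields an edge-labeling by gap for any graph with no K_2 component. -/

import Mathlib

/-- The induced color of the vertex `v` under an edge-labeling `f`:
`1` if `v` is isolated, the label of the unique incident edge if `deg v = 1`,
and `max_{e ∋ v} f e − min_{e ∋ v} f e` otherwise. -/
noncomputable def gapEdgeColor {V : Type*} [Fintype V] [DecidableEq V]
    (G : SimpleGraph V) (f : Sym2 V → ℕ) (v : V) : ℕ :=
  letI := Classical.decRel G.Adj
  if G.degree v = 0 then 1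
  else if G.degree v = 1 then (G.incidenceFinset v).sup f
  else (G.incidenceFinset v).sup f - sInf (f '' G.incidenceSet v)

open SimpleGraph Finset

lemma gapEdgeColor_eq {V : Type*} [Fintype V] [DecidableEq V]
    (G : SimpleGraph V) [DecidableRel G.Adj] (f : Sym2 V → ℕ) (v : V) :
    gapEdgeColor G f v =
      if G.degree v = 0 then 1
      else if G.degree v = 1 then (G.incidenceFinset v).sup f
      else (G.incidenceFinset v).sup f - sInf (f '' G.incidenceSet v) := by
  unfold gapEdgeColor
  congr!

lemma pow4_lt_pow4 {a b : ℕ} (h : a < b) : (4:ℕ) ^ a < 4 ^ b :=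
  Nat.pow_lt_pow_right (by norm_num) h

lemma pow4_diff_lt {a b c d : ℕ} (hab : b < a) (hcd : d < c) (hac : a < c) :
    (4:ℕ) ^ a - 4 ^ b < 4 ^ c - 4 ^ d := by
  have h1 : (4:ℕ) ^ a - 4 ^ b < 4 ^ a := by
    have := pow4_lt_pow4 hab
    have : 0 < (4:ℕ)^b := Nat.pow_pos (by norm_num)
    omega
  have h2 : (3:ℕ) * 4 ^ (c - 1) ≤ 4 ^ c - 4 ^ d := by
    have hd : (4:ℕ) ^ d ≤ 4 ^ (c - 1) := Nat.pow_le_pow_right (by norm_num) (by omega)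
    have hc : (4:ℕ) ^ c = 4 * 4 ^ (c - 1) := by
      conv_lhs => rw [show c = (c-1) + 1 by omega]
      ring
    omega
  have h3 : (4:ℕ) ^ a ≤ 4 ^ (c - 1) := Nat.pow_le_pow_right (by norm_num) (by omega)
  omega

lemma pow4_diff_inj {a b c d : ℕ} (hab : b < a) (hcd : d < c)
    (h : (4:ℕ) ^ a - 4 ^ b = 4 ^ c - 4 ^ d) : a = c ∧ b = d := by
  have hac : a = c := by
    rcases lt_trichotomy a c with hlt | he | hgt
    · exact absurd h (pow4_diff_lt hab hcd hlt).ne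
    · exact he
    · exact absurd h.symm (pow4_diff_lt hcd hab hgt).ne
  subst hac
  have h1 := (pow4_lt_pow4 hab).le
  have h2 := (pow4_lt_pow4 hcd).le
  have : (4:ℕ) ^ b = 4 ^ d := by omega
  exact ⟨rfl, Nat.pow_right_injective (by norm_num) this⟩

lemma pow4_diff_ne_pow4 {a b k : ℕ} (hab : b < a) : (4:ℕ) ^ a - 4 ^ b ≠ 4 ^ k := by
  intro h
  have h2 : (3:ℕ) * 4 ^ (a - 1) ≤ 4 ^ a - 4 ^ b := by
    have hd : (4:ℕ) ^ b ≤ 4 ^ (a - 1) := Nat.pow_le_pow_right (by norm_num) (by omega)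
    have hc : (4:ℕ) ^ a = 4 * 4 ^ (a - 1) := by
      conv_lhs => rw [show a = (a-1) + 1 by omega]
      ring
    omega
  have h1 : (4:ℕ) ^ a - 4 ^ b < 4 ^ a := by
    have := pow4_lt_pow4 hab
    have : 0 < (4:ℕ)^b := Nat.pow_pos (by norm_num)
    omega
  rw [h] at h2 h1
  have hk : k < a := by
    by_contra hk
    have := Nat.pow_le_pow_right (show 1 ≤ 4 by norm_num) (not_lt.mp hk)
    omega
  have h3 : (4:ℕ) ^ k ≤ 4 ^ (a - 1) := Nat.pow_le_pow_right (by norm_num) (by omega)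
  have h4 : (3:ℕ) * 4 ^ (a - 1) ≤ 4 ^ (a - 1) := h2.trans h3
  have h5 : 0 < (4:ℕ) ^ (a - 1) := Nat.pow_pos (by norm_num)
  omega

lemma gapEdgeColor_deg_one {V : Type*} [Fintype V] [DecidableEq V]
    (G : SimpleGraph V) [DecidableRel G.Adj] (f : Sym2 V → ℕ) {u v : V}
    (h : G.Adj u v) (hd : G.degree u = 1) :
    gapEdgeColor G f u = f s(u, v) := by
  have hm : s(u, v) ∈ G.incidenceFinset u := by
    rw [mem_incidenceFinset]
    exact G.mk'_mem_incidenceSet_left_iff.2 h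
  have hc : (G.incidenceFinset u).card = 1 := by
    rw [card_incidenceFinset_eq_degree]; exact hd
  obtain ⟨e, he⟩ := Finset.card_eq_one.mp hc
  rw [he, Finset.mem_singleton] at hm
  rw [gapEdgeColor_eq, if_neg (by omega), if_pos hd, he, ← hm, Finset.sup_singleton]

/-- Structure of the color of a vertex of degree ≥ 2, for labels `4 ^ g e`. -/
lemma gapEdgeColor_deg_two {V : Type*} [Fintype V] [DecidableEq V]
    (G : SimpleGraph V) [DecidableRel G.Adj] {g : Sym2 V → ℕ} (hg : Function.Injective g)
    {v : V} (hd : 2 ≤ G.degree v) :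
    ∃ ea eb, ea ∈ G.incidenceSet v ∧ eb ∈ G.incidenceSet v ∧ g eb < g ea ∧
      gapEdgeColor G (fun s => 4 ^ g s) v = 4 ^ g ea - 4 ^ g eb := by
  set f : Sym2 V → ℕ := fun s => 4 ^ g s with hf
  have hcard : 2 ≤ (G.incidenceFinset v).card := by
    rw [card_incidenceFinset_eq_degree]; exact hd
  have hne : (G.incidenceFinset v).Nonempty := Finset.card_pos.mp (by omega)
  obtain ⟨ea, hea, hsup⟩ := Finset.exists_mem_eq_sup _ hne f
  have hsetne : (f '' G.incidenceSet v).Nonempty :=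
    ⟨f ea, ea, (G.mem_incidenceFinset v ea).mp hea, rfl⟩
  obtain ⟨eb, heb, hfb⟩ := Nat.sInf_mem hsetne
  refine ⟨ea, eb, (G.mem_incidenceFinset v ea).mp hea, heb, ?_, ?_⟩
  · -- g eb < g ea
    obtain ⟨e1, he1, e2, he2, hne12⟩ := Finset.one_lt_card.mp hcard
    have hle1 : f eb ≤ f e1 := hfb ▸ Nat.sInf_le ⟨e1, (G.mem_incidenceFinset v e1).mp he1, rfl⟩
    have hle2 : f eb ≤ f e2 := hfb ▸ Nat.sInf_le ⟨e2, (G.mem_incidenceFinset v e2).mp he2, rfl⟩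
    have hge1 : f e1 ≤ f ea := hsup ▸ Finset.le_sup he1
    have hge2 : f e2 ≤ f ea := hsup ▸ Finset.le_sup he2
    have hne' : f e1 ≠ f e2 := fun hh =>
      hne12 (hg (Nat.pow_right_injective (by norm_num) hh))
    have : f eb < f ea := by omega
    exact (Nat.pow_lt_pow_iff_right (show 1 < 4 by norm_num)).mp this
  · rw [gapEdgeColor_eq, if_neg (by omega), if_neg (by omega), hsup, ← hfb]

/-- A graph has an edge-labeling by gap iff it has no connected component isomorphic
to `K₂`, i.e. no edge both of whose endpoints have degree `1`. -/
theorem edge_labeling_by_gap_iff_no_K2_component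
    {V : Type*} [Fintype V] [DecidableEq V] (G : SimpleGraph V) [DecidableRel G.Adj] :
    (∃ f : Sym2 V → ℕ, ∀ u v, G.Adj u v → gapEdgeColor G f u ≠ gapEdgeColor G f v) ↔
    ¬∃ u v, G.Adj u v ∧ G.degree u = 1 ∧ G.degree v = 1 := by
  constructor
  · rintro ⟨f, hf⟩ ⟨u, v, huv, hu, hv⟩
    apply hf u v huv
    rw [gapEdgeColor_deg_one G f huv hu, gapEdgeColor_deg_one G f huv.symm hv,
      Sym2.eq_swap]
  · intro hno
    classical
    set g : Sym2 V → ℕ := fun s => (Fintype.equivFin (Sym2 V) s : ℕ) with hgdef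
    have hg : Function.Injective g := fun a b h => by
      apply (Fintype.equivFin (Sym2 V)).injective
      exact Fin.ext h
    refine ⟨fun s => 4 ^ g s, fun u v huv hcol => ?_⟩
    have hdu : 0 < G.degree u := (G.degree_pos_iff_exists_adj u).mpr ⟨v, huv⟩
    have hdv : 0 < G.degree v := (G.degree_pos_iff_exists_adj v).mpr ⟨u, huv.symm⟩
    rcases Nat.lt_or_ge (G.degree u) 2 with hu | hu <;>
      rcases Nat.lt_or_ge (G.degree v) 2 with hv | hv
    · exact hno ⟨u, v, huv, by omega, by omega⟩
    · obtain ⟨ea, eb, _, _, hba, hcv⟩ := gapEdgeColor_deg_two G hg hv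
      rw [gapEdgeColor_deg_one G _ huv (by omega), hcv] at hcol
      exact pow4_diff_ne_pow4 hba hcol.symm
    · obtain ⟨ea, eb, _, _, hba, hcu⟩ := gapEdgeColor_deg_two G hg hu
      rw [gapEdgeColor_deg_one G _ huv.symm (by omega), hcu] at hcol
      exact pow4_diff_ne_pow4 hba hcol
    · obtain ⟨ea, eb, hea, heb, hba, hcu⟩ := gapEdgeColor_deg_two G hg hu
      obtain ⟨ea', eb', hea', heb', hba', hcv⟩ := gapEdgeColor_deg_two G hg hv
      rw [hcu, hcv] at hcol
      obtain ⟨h1, h2⟩ := pow4_diff_inj hba hba' hcol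
      have hea2 : ea = ea' := hg h1
      have heb2 : eb = eb' := hg h2
      subst hea2; subst heb2
      have hmax : ea = s(u, v) := by
        have := G.incidenceSet_inter_incidenceSet_of_adj huv
        have : ea ∈ ({s(u,v)} : Set (Sym2 V)) := this ▸ ⟨hea, hea'⟩
        simpa using this
      have hmin : eb = s(u, v) := by
        have := G.incidenceSet_inter_incidenceSet_of_adj huv
        have : eb ∈ ({s(u,v)} : Set (Sym2 V)) := this ▸ ⟨heb, heb'⟩
        simpa using this
      rw [hmax, hmin] at hba
      exact lt_irrefl _ hba
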